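/- Set f0 := y−1, f1 := y, f2 := x, f3 := y+w²−t, f4 := z. For each i ∈ {0,1,2,3,4}, if αi = 0 then fi is an invariant divisor of the A7^(2) system: the total derivative of fi along the Hamiltonian vector field, namely ∂fi/∂t + (∂H/∂y)(∂fi/∂x) − (∂H/∂x)(∂fi/∂y) + (∂H/∂w)(∂fi/∂z) − (∂H/∂z)(∂fi/∂w), is divisible by fi in the polynomial ring ℂ(t)[x,y,z,w]. In particular, the zero locus of fi is preserved by the flow of the A7^(2) system when αi = 0. -/

import Mathlib

/- STATEMENT 1: invariant divisors of the A7^(2) system.  For each i, if αi = 0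
then the total derivative of fi along the Hamiltonian vector field is divisible
by fi.  Divisibility in ℂ(t)[x,y,z,w] is formalized as the existence of a
cofactor g with D fi = fi * g pointwise (for all t ∉ {0,1} and all x,y,z,w);
since fi is irreducible and the total derivative is polynomial in x,y,z,w with
coefficients rational in t, this is equivalent to divisibility in the polynomial
ring.  In particular the zero locus of fi is preserved by the flow. -/

open Complex

noncomputable def HA7 (a0 a1 a2 a3 a4 : ℂ) (t x y z w : ℂ) : ℂ :=
  (x^2*y^3 - ((t+1)*x + 2*a2 + a3 + a4)*x*y^2
    + (t*x^2 + (a0 + 2*a2 + a3 + a4 - (a0+a1)*t)*x + a2*(a2+a3+a4))*y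
    + a1*t*x
    + (1/4) * (-(z^2*w^4) + 2*a4*z*w^3 + ((2*t-1)*z^2 - a4^2)*w^2
        - 2*(-a0 - 2*a2 - a3 - a4 + (a4+1)*t)*z*w - t*(t-1)*z^2)
    + y*((y-1)*x - a2)*z*w) / (t*(t-1))

noncomputable def pdX (H : ℂ → ℂ → ℂ → ℂ → ℂ → ℂ) (t x y z w : ℂ) : ℂ :=
  deriv (fun s => H t s y z w) x

noncomputable def pdY (H : ℂ → ℂ → ℂ → ℂ → ℂ → ℂ) (t x y z w : ℂ) : ℂ :=
  deriv (fun s => H t x s z w) y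

noncomputable def pdZ (H : ℂ → ℂ → ℂ → ℂ → ℂ → ℂ) (t x y z w : ℂ) : ℂ :=
  deriv (fun s => H t x y s w) z

noncomputable def pdW (H : ℂ → ℂ → ℂ → ℂ → ℂ → ℂ) (t x y z w : ℂ) : ℂ :=
  deriv (fun s => H t x y z s) w

noncomputable def pdT (f : ℂ → ℂ → ℂ → ℂ → ℂ → ℂ) (t x y z w : ℂ) : ℂ :=
  deriv (fun s => f s x y z w) t

/-- Total derivative of `f` along the Hamiltonian vector field of `H`:
`∂f/∂t + (∂H/∂y)(∂f/∂x) − (∂H/∂x)(∂f/∂y) + (∂H/∂w)(∂f/∂z) − (∂H/∂z)(∂f/∂w)`. -/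
noncomputable def totalDeriv (H f : ℂ → ℂ → ℂ → ℂ → ℂ → ℂ) (t x y z w : ℂ) : ℂ :=
  pdT f t x y z w
  + pdY H t x y z w * pdX f t x y z w
  - pdX H t x y z w * pdY f t x y z w
  + pdW H t x y z w * pdZ f t x y z w
  - pdZ H t x y z w * pdW f t x y z w


lemma deriv_quartic (A B C D E k v : ℂ) :
    deriv (fun s : ℂ => (A*s^4 + B*s^3 + C*s^2 + D*s + E)/k) v
      = (4*A*v^3 + 3*B*v^2 + 2*C*v + D)/k := by
  have heq : (fun s : ℂ => (A*s^4 + B*s^3 + C*s^2 + D*s + E)/k)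
      = fun s : ℂ => (A*s^4 + B*s^3 + C*s^2 + D*s^1 + E) * k⁻¹ := by
    funext s; rw [pow_one, div_eq_mul_inv]
  rw [heq]
  have h4 := (hasDerivAt_pow 4 v).const_mul A
  have h3 := (hasDerivAt_pow 3 v).const_mul B
  have h2 := (hasDerivAt_pow 2 v).const_mul C
  have h1 := (hasDerivAt_pow 1 v).const_mul D
  have h : HasDerivAt (fun s : ℂ => (A*s^4 + B*s^3 + C*s^2 + D*s^1 + E) * k⁻¹) _ v := ((((h4.add h3).add h2).add h1).add_const E).mul_const k⁻¹
  rw [h.deriv]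
  push_cast
  ring

lemma pdX_HA7 (a0 a1 a2 a3 a4 t x y z w : ℂ) :
    pdX (HA7 a0 a1 a2 a3 a4) t x y z w =
      (4*(0)*x^3 + 3*(0)*x^2 + 2*((1)*y*t + (-1)*y^2 + (-1)*y^2*t + (1)*y^3)*x + ((1)*t*a1 + (1)*y*a4 + (1)*y*a3 + (2)*y*a2 + (1)*y*a0 + (-1)*y*t*a1 + (-1)*y*t*a0 + (-1)*y*z*w + (-1)*y^2*a4 + (-1)*y^2*a3 + (-2)*y^2*a2 + (1)*y^2*z*w)) / (t*(t-1)) := by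
  have heq : (fun s => HA7 a0 a1 a2 a3 a4 t s y z w)
      = fun s : ℂ => ((0)*s^4 + (0)*s^3 + ((1)*y*t + (-1)*y^2 + (-1)*y^2*t + (1)*y^3)*s^2 + ((1)*t*a1 + (1)*y*a4 + (1)*y*a3 + (2)*y*a2 + (1)*y*a0 + (-1)*y*t*a1 + (-1)*y*t*a0 + (-1)*y*z*w + (-1)*y^2*a4 + (-1)*y^2*a3 + (-2)*y^2*a2 + (1)*y^2*z*w)*s + (((-1)/4)*w^2*a4^2 + ((1)/2)*z*w*a4 + ((1)/2)*z*w*a3 + (1)*z*w*a2 + ((1)/2)*z*w*a0 + ((-1)/2)*z*w*t + ((-1)/2)*z*w*t*a4 + ((1)/2)*z*w^3*a4 + ((1)/4)*z^2*t + ((-1)/4)*z^2*t^2 + ((-1)/4)*z^2*w^2 + ((1)/2)*z^2*w^2*t + ((-1)/4)*z^2*w^4 + (1)*y*a2*a4 + (1)*y*a2*a3 + (1)*y*a2^2 + (-1)*y*z*w*a2))/(t*(t-1)) := by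
    funext s; unfold HA7; ring
  unfold pdX; rw [heq, deriv_quartic]

lemma pdY_HA7 (a0 a1 a2 a3 a4 t x y z w : ℂ) :
    pdY (HA7 a0 a1 a2 a3 a4) t x y z w =
      (4*(0)*y^3 + 3*((1)*x^2)*y^2 + 2*((-1)*x*a4 + (-1)*x*a3 + (-2)*x*a2 + (1)*x*z*w + (-1)*x^2 + (-1)*x^2*t)*y + ((1)*a2*a4 + (1)*a2*a3 + (1)*a2^2 + (-1)*z*w*a2 + (1)*x*a4 + (1)*x*a3 + (2)*x*a2 + (1)*x*a0 + (-1)*x*t*a1 + (-1)*x*t*a0 + (-1)*x*z*w + (1)*x^2*t)) / (t*(t-1)) := by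
  have heq : (fun s => HA7 a0 a1 a2 a3 a4 t x s z w)
      = fun s : ℂ => ((0)*s^4 + ((1)*x^2)*s^3 + ((-1)*x*a4 + (-1)*x*a3 + (-2)*x*a2 + (1)*x*z*w + (-1)*x^2 + (-1)*x^2*t)*s^2 + ((1)*a2*a4 + (1)*a2*a3 + (1)*a2^2 + (-1)*z*w*a2 + (1)*x*a4 + (1)*x*a3 + (2)*x*a2 + (1)*x*a0 + (-1)*x*t*a1 + (-1)*x*t*a0 + (-1)*x*z*w + (1)*x^2*t)*s + (((-1)/4)*w^2*a4^2 + ((1)/2)*z*w*a4 + ((1)/2)*z*w*a3 + (1)*z*w*a2 + ((1)/2)*z*w*a0 + ((-1)/2)*z*w*t + ((-1)/2)*z*w*t*a4 + ((1)/2)*z*w^3*a4 + ((1)/4)*z^2*t + ((-1)/4)*z^2*t^2 + ((-1)/4)*z^2*w^2 + ((1)/2)*z^2*w^2*t + ((-1)/4)*z^2*w^4 + (1)*x*t*a1))/(t*(t-1)) := by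
    funext s; unfold HA7; ring
  unfold pdY; rw [heq, deriv_quartic]

lemma pdZ_HA7 (a0 a1 a2 a3 a4 t x y z w : ℂ) :
    pdZ (HA7 a0 a1 a2 a3 a4) t x y z w =
      (4*(0)*z^3 + 3*(0)*z^2 + 2*(((1)/4)*t + ((-1)/4)*t^2 + ((-1)/4)*w^2 + ((1)/2)*w^2*t + ((-1)/4)*w^4)*z + (((1)/2)*w*a4 + ((1)/2)*w*a3 + (1)*w*a2 + ((1)/2)*w*a0 + ((-1)/2)*w*t + ((-1)/2)*w*t*a4 + ((1)/2)*w^3*a4 + (-1)*y*w*a2 + (-1)*x*y*w + (1)*x*y^2*w)) / (t*(t-1)) := by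
  have heq : (fun s => HA7 a0 a1 a2 a3 a4 t x y s w)
      = fun s : ℂ => ((0)*s^4 + (0)*s^3 + (((1)/4)*t + ((-1)/4)*t^2 + ((-1)/4)*w^2 + ((1)/2)*w^2*t + ((-1)/4)*w^4)*s^2 + (((1)/2)*w*a4 + ((1)/2)*w*a3 + (1)*w*a2 + ((1)/2)*w*a0 + ((-1)/2)*w*t + ((-1)/2)*w*t*a4 + ((1)/2)*w^3*a4 + (-1)*y*w*a2 + (-1)*x*y*w + (1)*x*y^2*w)*s + (((-1)/4)*w^2*a4^2 + (1)*y*a2*a4 + (1)*y*a2*a3 + (1)*y*a2^2 + (1)*x*t*a1 + (1)*x*y*a4 + (1)*x*y*a3 + (2)*x*y*a2 + (1)*x*y*a0 + (-1)*x*y*t*a1 + (-1)*x*y*t*a0 + (-1)*x*y^2*a4 + (-1)*x*y^2*a3 + (-2)*x*y^2*a2 + (1)*x^2*y*t + (-1)*x^2*y^2 + (-1)*x^2*y^2*t + (1)*x^2*y^3))/(t*(t-1)) := by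
    funext s; unfold HA7; ring
  unfold pdZ; rw [heq, deriv_quartic]

lemma pdW_HA7 (a0 a1 a2 a3 a4 t x y z w : ℂ) :
    pdW (HA7 a0 a1 a2 a3 a4) t x y z w =
      (4*(((-1)/4)*z^2)*w^3 + 3*(((1)/2)*z*a4)*w^2 + 2*(((-1)/4)*a4^2 + ((-1)/4)*z^2 + ((1)/2)*z^2*t)*w + (((1)/2)*z*a4 + ((1)/2)*z*a3 + (1)*z*a2 + ((1)/2)*z*a0 + ((-1)/2)*z*t + ((-1)/2)*z*t*a4 + (-1)*y*z*a2 + (-1)*x*y*z + (1)*x*y^2*z)) / (t*(t-1)) := by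
  have heq : (fun s => HA7 a0 a1 a2 a3 a4 t x y z s)
      = fun s : ℂ => ((((-1)/4)*z^2)*s^4 + (((1)/2)*z*a4)*s^3 + (((-1)/4)*a4^2 + ((-1)/4)*z^2 + ((1)/2)*z^2*t)*s^2 + (((1)/2)*z*a4 + ((1)/2)*z*a3 + (1)*z*a2 + ((1)/2)*z*a0 + ((-1)/2)*z*t + ((-1)/2)*z*t*a4 + (-1)*y*z*a2 + (-1)*x*y*z + (1)*x*y^2*z)*s + (((1)/4)*z^2*t + ((-1)/4)*z^2*t^2 + (1)*y*a2*a4 + (1)*y*a2*a3 + (1)*y*a2^2 + (1)*x*t*a1 + (1)*x*y*a4 + (1)*x*y*a3 + (2)*x*y*a2 + (1)*x*y*a0 + (-1)*x*y*t*a1 + (-1)*x*y*t*a0 + (-1)*x*y^2*a4 + (-1)*x*y^2*a3 + (-2)*x*y^2*a2 + (1)*x^2*y*t + (-1)*x^2*y^2 + (-1)*x^2*y^2*t + (1)*x^2*y^3))/(t*(t-1)) := by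
    funext s; unfold HA7; ring
  unfold pdW; rw [heq, deriv_quartic]

set_option maxHeartbeats 2000000 in
theorem invariant_divisors_A7 (a0 a1 a2 a3 a4 : ℂ)
    (hrel : a0 + a1 + 2*a2 + 2*a3 + a4 = 1) :
    -- f0 = y - 1
    (a0 = 0 → ∃ g : ℂ → ℂ → ℂ → ℂ → ℂ → ℂ, ∀ t x y z w : ℂ, t ≠ 0 → t ≠ 1 →
      totalDeriv (HA7 a0 a1 a2 a3 a4) (fun _ _ y _ _ => y - 1) t x y z w
        = (y - 1) * g t x y z w) ∧
    -- f1 = y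
    (a1 = 0 → ∃ g : ℂ → ℂ → ℂ → ℂ → ℂ → ℂ, ∀ t x y z w : ℂ, t ≠ 0 → t ≠ 1 →
      totalDeriv (HA7 a0 a1 a2 a3 a4) (fun _ _ y _ _ => y) t x y z w
        = y * g t x y z w) ∧
    -- f2 = x
    (a2 = 0 → ∃ g : ℂ → ℂ → ℂ → ℂ → ℂ → ℂ, ∀ t x y z w : ℂ, t ≠ 0 → t ≠ 1 →
      totalDeriv (HA7 a0 a1 a2 a3 a4) (fun _ x _ _ _ => x) t x y z w
        = x * g t x y z w) ∧
    -- f3 = y + w² - t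
    (a3 = 0 → ∃ g : ℂ → ℂ → ℂ → ℂ → ℂ → ℂ, ∀ t x y z w : ℂ, t ≠ 0 → t ≠ 1 →
      totalDeriv (HA7 a0 a1 a2 a3 a4) (fun t _ y _ w => y + w^2 - t) t x y z w
        = (y + w^2 - t) * g t x y z w) ∧
    -- f4 = z
    (a4 = 0 → ∃ g : ℂ → ℂ → ℂ → ℂ → ℂ → ℂ, ∀ t x y z w : ℂ, t ≠ 0 → t ≠ 1 →
      totalDeriv (HA7 a0 a1 a2 a3 a4) (fun _ _ _ z _ => z) t x y z w
        = z * g t x y z w) := by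
  
  have key : ∀ (f : ℂ → ℂ → ℂ → ℂ → ℂ → ℂ), True := fun _ => trivial
  refine ⟨?_, ?_, ?_, ?_, ?_⟩
  · intro h
    subst h
    refine ⟨fun t x y z w => ((1)*t*a1 + (1)*y*a4 + (1)*y*a3 + (2)*y*a2 + (-1)*y*z*w + (2)*x*y*t + (-2)*x*y^2)/(t*(t-1)), fun t x y z w ht ht1 => ?_⟩
    have h1 : t - 1 ≠ 0 := sub_ne_zero.mpr ht1
    unfold totalDeriv
    rw [pdX_HA7, pdY_HA7, pdZ_HA7, pdW_HA7]
    unfold pdT pdX pdY pdZ pdW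
    simp only [deriv_const', deriv_sub_const, deriv_id'']
    ring
  · intro h
    subst h
    refine ⟨fun t x y z w => ((-1)*a4 + (-1)*a3 + (-2)*a2 + (-1)*a0 + (1)*t*a0 + (1)*z*w + (1)*y*a4 + (1)*y*a3 + (2)*y*a2 + (-1)*y*z*w + (-2)*x*t + (2)*x*y + (2)*x*y*t + (-2)*x*y^2)/(t*(t-1)), fun t x y z w ht ht1 => ?_⟩
    have h1 : t - 1 ≠ 0 := sub_ne_zero.mpr ht1
    unfold totalDeriv
    rw [pdX_HA7, pdY_HA7, pdZ_HA7, pdW_HA7]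
    unfold pdT pdX pdY pdZ pdW
    simp only [deriv_const', deriv_id'']
    ring
  · intro h
    subst h
    refine ⟨fun t x y z w => ((1)*a4 + (1)*a3 + (1)*a0 + (-1)*t*a1 + (-1)*t*a0 + (-1)*z*w + (-2)*y*a4 + (-2)*y*a3 + (2)*y*z*w + (1)*x*t + (-2)*x*y + (-2)*x*y*t + (3)*x*y^2)/(t*(t-1)), fun t x y z w ht ht1 => ?_⟩
    have h1 : t - 1 ≠ 0 := sub_ne_zero.mpr ht1
    unfold totalDeriv
    rw [pdX_HA7, pdY_HA7, pdZ_HA7, pdW_HA7]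
    unfold pdT pdX pdY pdZ pdW
    simp only [deriv_const', deriv_id'']
    ring
  · intro h
    subst h
    have ha0 : a0 = 1 - a1 - 2*a2 - a4 := by linear_combination hrel
    subst ha0
    refine ⟨fun t x y z w => ((-1)*1 + (1)*a1 + (1)*t + (-1)*w^2*a4 + (1)*z*w + (-1)*z*w*t + (1)*z*w^3 + (1)*y*a4 + (2)*y*a2 + (-1)*y*z*w + (2)*x*y + (-2)*x*y^2)/(t*(t-1)), fun t x y z w ht ht1 => ?_⟩
    have h1 : t - 1 ≠ 0 := sub_ne_zero.mpr ht1
    unfold totalDeriv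
    rw [pdX_HA7, pdY_HA7, pdZ_HA7, pdW_HA7]
    unfold pdT pdX pdY pdZ pdW
    have e1 : deriv (fun s : ℂ => y + w ^ 2 - s) t = -1 := by
      have : (fun s : ℂ => y + w ^ 2 - s) = fun s : ℂ => (y + w ^ 2) - s := by
        funext s; ring
      rw [this, deriv_const_sub, deriv_id'']
    have e2 : deriv (fun s : ℂ => y + s ^ 2 - t) w = 2*w := by
      have : (fun s : ℂ => y + s ^ 2 - t) = fun s : ℂ => s ^ 2 + (y - t) := by
        funext s; ring
      rw [this, deriv_add_const]
      simp [deriv_pow]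
    have e3 : deriv (fun s : ℂ => s + w ^ 2 - t) y = 1 := by
      have : (fun s : ℂ => s + w ^ 2 - t) = fun s : ℂ => s + (w ^ 2 - t) := by
        funext s; ring
      rw [this, deriv_add_const, deriv_id'']
    rw [e1, e2, e3]
    simp only [deriv_const']
    have hd : t*(t-1) / (t*(t-1)) = 1 := div_self (mul_ne_zero ht h1)
    linear_combination hd
  · intro h
    subst h
    refine ⟨fun t x y z w => (((1)/2)*a3 + (1)*a2 + ((1)/2)*a0 + ((-1)/2)*t + ((-1)/2)*z*w + (1)*z*w*t + (-1)*z*w^3 + (-1)*y*a2 + (-1)*x*y + (1)*x*y^2)/(t*(t-1)), fun t x y z w ht ht1 => ?_⟩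
    have h1 : t - 1 ≠ 0 := sub_ne_zero.mpr ht1
    unfold totalDeriv
    rw [pdX_HA7, pdY_HA7, pdZ_HA7, pdW_HA7]
    unfold pdT pdX pdY pdZ pdW
    simp only [deriv_const', deriv_id'']
    ring
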